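/- Under hypotheses (i)–(iv) on the process v, let ℓ and ℓ' be continuous linear functionals on H. Then the function t ↦ E[ℓ(v_0)ℓ'(v_t)] is absolutely integrable on [0, ∞), and lim_{T→∞} (1/T) · E[ ( ∫_0^T ℓ(v_s) ds ) ( ∫_0^T ℓ'(v_s) ds ) ] = ∫_0^∞ E[ ℓ(v_0)ℓ'(v_t) + ℓ'(v_0)ℓ(v_t) ] dt. -/

import Mathlib

open MeasureTheory Filter Set

private lemma intExpAbs {b : ℝ} (hb : 0 < b) :
    Integrable (fun t : ℝ => Real.exp (-b * |t|)) := by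
  have h1 : IntegrableOn (fun t : ℝ => Real.exp (-b * |t|)) (Ioi 0) := by
    refine (exp_neg_integrableOn_Ioi 0 hb).congr_fun (fun x hx => ?_) measurableSet_Ioi
    rw [abs_of_pos hx]
  have h2 : IntegrableOn (fun t : ℝ => Real.exp (-b * |t|)) (Iic 0) := by
    rw [← Measure.map_neg_eq_self (volume : Measure ℝ)]
    have m : MeasurableEmbedding fun x : ℝ => -x := (Homeomorph.neg ℝ).measurableEmbedding
    rw [m.integrableOn_map_iff]
    simp_rw [Function.comp_def, abs_neg, neg_preimage, neg_Iic, neg_zero]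
    exact (integrableOn_Ici_iff_integrableOn_Ioi (b := (0:ℝ))).mpr h1
  have h3 := h2.union h1
  rwa [Iic_union_Ioi, integrableOn_univ] at h3

/-- **The limiting covariance (Propositions 2.5 and Theorem 2.10).** With `v` as in
hypotheses (i)–(iv) and `ℓ, ℓ'` continuous linear functionals on `H`, the function
`t ↦ E[ℓ(v_0)ℓ'(v_t)]` is absolutely integrable on `[0, ∞)`, and
`(1/T)·E[(∫_0^T ℓ(v_s) ds)(∫_0^T ℓ'(v_s) ds)] → ∫_0^∞ E[ℓ(v_0)ℓ'(v_t) + ℓ'(v_0)ℓ(v_t)] dt`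
as `T → ∞`. -/
theorem stmt10
    {H : Type*} [NormedAddCommGroup H] [InnerProductSpace ℝ H] [CompleteSpace H]
    [SecondCountableTopology H] [MeasurableSpace H] [BorelSpace H]
    {Ω : Type*} {mΩ : MeasurableSpace Ω} (P : Measure Ω) [IsProbabilityMeasure P]
    (C τ : ℝ) (hC : 0 ≤ C) (hτ : 0 < τ)
    (F : ℝ → MeasurableSpace Ω) (v : ℝ → Ω → H)
    (hFmono : Monotone F) (hFle : ∀ t : ℝ, F t ≤ mΩ)
    (hjm : StronglyMeasurable (Function.uncurry v))
    (hnorm : ∀ t : ℝ, ∀ᵐ ω ∂P, ‖v t ω‖ = 1)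
    (hadapt : ∀ t : ℝ, StronglyMeasurable[F t] (v t))
    (hstat : ∀ (s : ℝ) (n : ℕ) (ts : Fin n → ℝ),
      Measure.map (fun ω i => v (ts i + s) ω) P
        = Measure.map (fun ω i => v (ts i) ω) P)
    (hdecay : ∀ s t : ℝ, s ≤ t →
      ∀ᵐ ω ∂P, ‖(P[v t | F s]) ω‖ ≤ C * Real.exp (-(t - s) / τ))
    (ℓ ℓ' : H →L[ℝ] ℝ) :
    IntegrableOn (fun t : ℝ => ∫ ω, ℓ (v 0 ω) * ℓ' (v t ω) ∂P) (Set.Ici (0:ℝ)) ∧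
    Tendsto (fun T : ℝ => T⁻¹ *
        ∫ ω, (∫ s in (0:ℝ)..T, ℓ (v s ω)) * (∫ s in (0:ℝ)..T, ℓ' (v s ω)) ∂P) atTop
      (nhds (∫ t in Set.Ioi (0:ℝ),
        (∫ ω, (ℓ (v 0 ω) * ℓ' (v t ω) + ℓ' (v 0 ω) * ℓ (v t ω)) ∂P))) := by
  classical
  -- basic measurability
  have hvsm : ∀ t : ℝ, StronglyMeasurable (v t) := fun t =>
    hjm.comp_measurable (measurable_const.prodMk measurable_id)
  have hvmeas : ∀ t : ℝ, Measurable (v t) := fun t => (hvsm t).measurable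
  -- integrability of products
  have hIprod : ∀ (L L' : H →L[ℝ] ℝ) (a b : ℝ),
      Integrable (fun ω => L (v a ω) * L' (v b ω)) P := by
    intro L L' a b
    refine (integrable_const (‖L‖ * ‖L'‖)).mono'
      (((L.continuous.comp_stronglyMeasurable (hvsm a)).mul
        (L'.continuous.comp_stronglyMeasurable (hvsm b))).aestronglyMeasurable) ?_
    filter_upwards [hnorm a, hnorm b] with ω h1 h2
    rw [Real.norm_eq_abs, abs_mul]
    have e1 : |L (v a ω)| ≤ ‖L‖ := by
      simpa [h1] using L.le_opNorm (v a ω)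
    have e2 : |L' (v b ω)| ≤ ‖L'‖ := by
      simpa [h2] using L'.le_opNorm (v b ω)
    exact mul_le_mul e1 e2 (abs_nonneg _) (norm_nonneg _)
  -- stationarity
  have hshift : ∀ (L L' : H →L[ℝ] ℝ) (a b s : ℝ),
      ∫ ω, L (v (a + s) ω) * L' (v (b + s) ω) ∂P = ∫ ω, L (v a ω) * L' (v b ω) ∂P := by
    intro L L' a b s
    have hg : Continuous fun x : Fin 2 → H => L (x 0) * L' (x 1) :=
      (L.continuous.comp (continuous_apply (0 : Fin 2))).mul
        (L'.continuous.comp (continuous_apply (1 : Fin 2)))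
    have hms : ∀ ts : Fin 2 → ℝ, Measurable fun ω (i : Fin 2) => v (ts i) ω := fun ts =>
      measurable_pi_lambda _ fun i => hvmeas (ts i)
    have h1 := hstat s 2 ![a, b]
    calc ∫ ω, L (v (a + s) ω) * L' (v (b + s) ω) ∂P
        = ∫ x, L (x 0) * L' (x 1) ∂(Measure.map (fun ω i => v (![a, b] i + s) ω) P) := by
          rw [integral_map (hms fun i => ![a, b] i + s).aemeasurable hg.aestronglyMeasurable]
          simp
      _ = ∫ x, L (x 0) * L' (x 1) ∂(Measure.map (fun ω (i : Fin 2) => v (![a, b] i) ω) P) := by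
          rw [h1]
      _ = ∫ ω, L (v a ω) * L' (v b ω) ∂P := by
          rw [integral_map (hms ![a, b]).aemeasurable hg.aestronglyMeasurable]
          simp
  -- decay of correlations
  have hdec : ∀ (L L' : H →L[ℝ] ℝ) (t : ℝ), 0 ≤ t →
      |∫ ω, L (v 0 ω) * L' (v t ω) ∂P| ≤ C * (‖L‖ * ‖L'‖) * Real.exp (-t / τ) := by
    intro L L' t ht
    have hm : F 0 ≤ mΩ := hFle 0
    haveI : SigmaFinite (P.trim hm) := by infer_instance
    have hX : StronglyMeasurable[F 0] fun ω => L (v 0 ω) :=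
      L.continuous.comp_stronglyMeasurable (hadapt 0)
    have hvt_int : Integrable (v t) P := by
      refine (integrable_const (1 : ℝ)).mono' (hvsm t).aestronglyMeasurable ?_
      filter_upwards [hnorm t] with ω h
      rw [h]
    have hY_int : Integrable (fun ω => L' (v t ω)) P := L'.integrable_comp hvt_int
    have hXY : Integrable ((fun ω => L (v 0 ω)) * fun ω => L' (v t ω)) P := hIprod L L' 0 t
    have e2 : P[(fun ω => L (v 0 ω)) * fun ω => L' (v t ω) | F 0]
        =ᵐ[P] (fun ω => L (v 0 ω)) * P[(fun ω => L' (v t ω)) | F 0] :=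
      condExp_mul_of_stronglyMeasurable_left hX hXY hY_int
    have e3 : (fun ω => L' ((P[v t | F 0]) ω)) =ᵐ[P] P[(fun ω => L' (v t ω)) | F 0] := by
      refine ae_eq_condExp_of_forall_setIntegral_eq hm hY_int ?_ ?_ ?_
      · intro s _ _
        exact (L'.integrable_comp integrable_condExp).integrableOn
      · intro s hs hμs
        rw [L'.integral_comp_comm integrable_condExp.integrableOn,
          setIntegral_condExp hm hvt_int hs, L'.integral_comp_comm hvt_int.integrableOn]
      · exact StronglyMeasurable.aestronglyMeasurable
          (L'.continuous.comp_stronglyMeasurable stronglyMeasurable_condExp)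
    have e1 : ∫ ω, L (v 0 ω) * L' (v t ω) ∂P
        = ∫ ω, L (v 0 ω) * L' ((P[v t | F 0]) ω) ∂P := by
      rw [show (∫ ω, L (v 0 ω) * L' (v t ω) ∂P)
          = ∫ ω, ((fun ω => L (v 0 ω)) * fun ω => L' (v t ω)) ω ∂P from rfl,
        ← integral_condExp hm]
      refine integral_congr_ae ?_
      filter_upwards [e2, e3] with ω h2 h3
      rw [h2, Pi.mul_apply, ← h3]
    have hb : ∀ᵐ ω ∂P, ‖L (v 0 ω) * L' ((P[v t | F 0]) ω)‖
        ≤ C * (‖L‖ * ‖L'‖) * Real.exp (-t / τ) := by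
      filter_upwards [hnorm 0, hdecay 0 t ht] with ω h1 h2
      rw [sub_zero] at h2
      rw [Real.norm_eq_abs, abs_mul]
      have b1 : |L (v 0 ω)| ≤ ‖L‖ := by simpa [h1] using L.le_opNorm (v 0 ω)
      have b2 : |L' ((P[v t | F 0]) ω)| ≤ ‖L'‖ * (C * Real.exp (-t / τ)) := by
        refine le_trans (L'.le_opNorm _) ?_
        exact mul_le_mul_of_nonneg_left h2 (norm_nonneg _)
      calc |L (v 0 ω)| * |L' ((P[v t | F 0]) ω)|
          ≤ ‖L‖ * (‖L'‖ * (C * Real.exp (-t / τ))) :=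
            mul_le_mul b1 b2 (abs_nonneg _) (norm_nonneg _)
        _ = C * (‖L‖ * ‖L'‖) * Real.exp (-t / τ) := by ring
    have := norm_integral_le_of_norm_le (integrable_const _) hb
    rw [e1]
    simpa using this
  -- the correlation functions
  set φf : ℝ → ℝ := fun t => ∫ ω, ℓ (v 0 ω) * ℓ' (v t ω) ∂P with hφf
  set ψf : ℝ → ℝ := fun t => ∫ ω, ℓ' (v 0 ω) * ℓ (v t ω) ∂P with hψf
  set k : ℝ → ℝ := fun t => if 0 ≤ t then φf t else ψf (-t) with hkdef
  set K : ℝ := C * (‖ℓ‖ * ‖ℓ'‖) with hK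
  -- measurability of the correlation functions
  have hsm2 : ∀ L L' : H →L[ℝ] ℝ,
      StronglyMeasurable fun p : ℝ × Ω => L (v 0 p.2) * L' (v p.1 p.2) := by
    intro L L'
    exact (L.continuous.comp_stronglyMeasurable ((hvsm 0).comp_measurable measurable_snd)).mul
      (L'.continuous.comp_stronglyMeasurable hjm)
  have hφsm : StronglyMeasurable φf := (hsm2 ℓ ℓ').integral_prod_right'
  have hψsm : StronglyMeasurable ψf := (hsm2 ℓ' ℓ).integral_prod_right'
  have hkm : Measurable k :=
    Measurable.ite measurableSet_Ici hφsm.measurable (hψsm.measurable.comp measurable_neg)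
  -- bound on k
  have hkb : ∀ t : ℝ, |k t| ≤ K * Real.exp (-τ⁻¹ * |t|) := by
    intro t
    by_cases ht : 0 ≤ t
    · rw [hkdef]
      simp only [if_pos ht]
      have := hdec ℓ ℓ' t ht
      rwa [abs_of_nonneg ht, neg_div, div_eq_inv_mul, ← neg_mul] at *
    · rw [hkdef]
      simp only [if_neg ht]
      push_neg at ht
      have ht' : 0 ≤ -t := by linarith
      have := hdec ℓ' ℓ (-t) ht'
      rw [abs_of_neg ht]
      rwa [neg_div, div_eq_inv_mul, ← neg_mul, mul_comm ‖ℓ'‖] at this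
  have hKnn : 0 ≤ K := mul_nonneg hC (mul_nonneg (norm_nonneg _) (norm_nonneg _))
  have hexpint : Integrable (fun t : ℝ => K * Real.exp (-τ⁻¹ * |t|)) :=
    (intExpAbs (inv_pos.mpr hτ)).const_mul K
  have hkint : Integrable k := by
    refine hexpint.mono' hkm.aestronglyMeasurable ?_
    exact Filter.Eventually.of_forall fun t => by rw [Real.norm_eq_abs]; exact hkb t
  -- first conjunct
  have hconj1 : IntegrableOn φf (Set.Ici (0:ℝ)) := by
    refine (hkint.integrableOn (s := Set.Ici 0)).congr_fun (fun t ht => ?_) measurableSet_Ici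
    have ht' : (0:ℝ) ≤ t := ht
    rw [hkdef]
    simp only [if_pos ht']
  -- two point function
  have hkeq : ∀ a b : ℝ, ∫ ω, ℓ (v a ω) * ℓ' (v b ω) ∂P = k (b - a) := by
    intro a b
    rcases le_or_gt a b with hab | hab
    · have h0 : (0 : ℝ) ≤ b - a := by linarith
      have := hshift ℓ ℓ' 0 (b - a) a
      rw [zero_add, sub_add_cancel] at this
      rw [this, hkdef]
      simp only [if_pos h0, hφf]
    · have h0 : ¬ (0 : ℝ) ≤ b - a := by intro h; linarith
      have := hshift ℓ' ℓ 0 (a - b) b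
      rw [zero_add, sub_add_cancel] at this
      rw [hkdef]
      simp only [if_neg h0, neg_sub]
      calc ∫ ω, ℓ (v a ω) * ℓ' (v b ω) ∂P
          = ∫ ω, ℓ' (v b ω) * ℓ (v a ω) ∂P := by simp_rw [mul_comm]
        _ = ∫ ω, ℓ' (v 0 ω) * ℓ (v (a - b) ω) ∂P := this
        _ = ψf (a - b) := by rw [hψf]
  -- a.e. joint norm-one property
  have hNmeas : MeasurableSet {r : ℝ × Ω | ¬ ‖v r.1 r.2‖ = 1} := by
    have hm : Measurable fun r : ℝ × Ω => ‖v r.1 r.2‖ := hjm.measurable.norm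
    have h1 : MeasurableSet {r : ℝ × Ω | ‖v r.1 r.2‖ = 1} :=
      hm (measurableSet_singleton 1)
    exact h1.compl
  have hprodnull : (volume.prod P) {r : ℝ × Ω | ¬ ‖v r.1 r.2‖ = 1} = 0 := by
    rw [Measure.measure_prod_null hNmeas]
    refine Filter.Eventually.of_forall fun t => ?_
    show P {ω | ¬ ‖v t ω‖ = 1} = 0
    exact ae_iff.mp (hnorm t)
  have hv_ae : ∀ᵐ ω ∂P, ∀ᵐ t : ℝ, ‖v t ω‖ = 1 := by
    refine Measure.ae_ae_of_ae_prod (μ := P) (ν := volume)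
      (p := fun q : Ω × ℝ => ‖v q.2 q.1‖ = 1) ?_
    rw [ae_iff]
    have hN' : MeasurableSet {q : Ω × ℝ | ¬ ‖v q.2 q.1‖ = 1} := hNmeas.preimage measurable_swap
    rw [← Measure.prod_swap, Measure.map_apply measurable_swap hN']
    exact hprodnull
  -- integrability of the correlation on the positive half line
  have hIOn : ∀ L L' : H →L[ℝ] ℝ,
      IntegrableOn (fun t => ∫ ω, L (v 0 ω) * L' (v t ω) ∂P) (Set.Ici (0:ℝ)) := by
    intro L L'
    refine Integrable.mono'
      (g := fun t => C * (‖L‖ * ‖L'‖) * Real.exp (-τ⁻¹ * |t|))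
      ((intExpAbs (inv_pos.mpr hτ)).const_mul _).integrableOn
      ((hsm2 L L').integral_prod_right'.aestronglyMeasurable.restrict) ?_
    rw [ae_restrict_iff' measurableSet_Ici]
    refine Filter.Eventually.of_forall fun t ht => ?_
    have ht' : (0:ℝ) ≤ t := ht
    show |∫ ω, L (v 0 ω) * L' (v t ω) ∂P| ≤ C * (‖L‖ * ‖L'‖) * Real.exp (-τ⁻¹ * |t|)
    rw [abs_of_nonneg ht']
    have h := hdec L L' t ht'
    rwa [neg_div, div_eq_inv_mul, ← neg_mul] at h
  -- the key identity for positive T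
  have key : ∀ T : ℝ, 0 < T →
      T⁻¹ * (∫ ω, (∫ s in (0:ℝ)..T, ℓ (v s ω)) * (∫ s in (0:ℝ)..T, ℓ' (v s ω)) ∂P)
        = ∫ t : ℝ, T⁻¹ * (max (min T (T - t) - max 0 (-t)) 0 * k t) := by
    intro T hT
    haveI hfin : IsFiniteMeasure (volume.restrict (Set.Ioc (0:ℝ) T)) := by
      constructor
      rw [Measure.restrict_apply_univ, Real.volume_Ioc]
      exact ENNReal.ofReal_lt_top
    -- step 1
    have step1 : ∀ ω, (∫ s in (0:ℝ)..T, ℓ (v s ω)) * (∫ s in (0:ℝ)..T, ℓ' (v s ω))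
        = ∫ z : ℝ × ℝ, ℓ (v z.1 ω) * ℓ' (v z.2 ω)
            ∂((volume.restrict (Set.Ioc (0:ℝ) T)).prod (volume.restrict (Set.Ioc (0:ℝ) T))) := by
      intro ω
      rw [intervalIntegral.integral_of_le hT.le, intervalIntegral.integral_of_le hT.le]
      exact (integral_prod_mul (fun s => ℓ (v s ω)) fun s => ℓ' (v s ω)).symm
    -- joint integrability
    have hsmG : StronglyMeasurable fun q : Ω × ℝ × ℝ => ℓ (v q.2.1 q.1) * ℓ' (v q.2.2 q.1) := by
      refine StronglyMeasurable.mul ?_ ?_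
      · exact ℓ.continuous.comp_stronglyMeasurable
          (hjm.comp_measurable ((measurable_fst.comp measurable_snd).prodMk measurable_fst))
      · exact ℓ'.continuous.comp_stronglyMeasurable
          (hjm.comp_measurable ((measurable_snd.comp measurable_snd).prodMk measurable_fst))
    have hboundG : ∀ᵐ q ∂(P.prod
        ((volume.restrict (Set.Ioc (0:ℝ) T)).prod (volume.restrict (Set.Ioc (0:ℝ) T)))),
        ‖ℓ (v q.2.1 q.1) * ℓ' (v q.2.2 q.1)‖ ≤ ‖ℓ‖ * ‖ℓ'‖ := by
      refine (Measure.ae_prod_iff_ae_ae ?_).mpr ?_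
      · exact measurableSet_le hsmG.measurable.norm measurable_const
      · filter_upwards [hv_ae] with ω hω
        have hbad : (volume.restrict (Set.Ioc (0:ℝ) T)) {t : ℝ | ¬ ‖v t ω‖ = 1} = 0 :=
          le_antisymm (le_trans (Measure.restrict_apply_le _ _) (le_of_eq (ae_iff.mp hω)))
            (zero_le)
        have h1 : ∀ᵐ z ∂((volume.restrict (Set.Ioc (0:ℝ) T)).prod
            (volume.restrict (Set.Ioc (0:ℝ) T))), ‖v z.1 ω‖ = 1 := by
          rw [ae_iff]
          refine measure_mono_null (fun z hz => ?_)
            (show ((volume.restrict (Set.Ioc (0:ℝ) T)).prod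
              (volume.restrict (Set.Ioc (0:ℝ) T)))
              ({t : ℝ | ¬ ‖v t ω‖ = 1} ×ˢ Set.univ) = 0 by
              rw [Measure.prod_prod, hbad, zero_mul])
          exact Set.mem_prod.mpr ⟨hz, Set.mem_univ _⟩
        have h2 : ∀ᵐ z ∂((volume.restrict (Set.Ioc (0:ℝ) T)).prod
            (volume.restrict (Set.Ioc (0:ℝ) T))), ‖v z.2 ω‖ = 1 := by
          rw [ae_iff]
          refine measure_mono_null (fun z hz => ?_)
            (show ((volume.restrict (Set.Ioc (0:ℝ) T)).prod
              (volume.restrict (Set.Ioc (0:ℝ) T)))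
              (Set.univ ×ˢ {t : ℝ | ¬ ‖v t ω‖ = 1}) = 0 by
              rw [Measure.prod_prod, hbad, mul_zero])
          exact Set.mem_prod.mpr ⟨Set.mem_univ _, hz⟩
        filter_upwards [h1, h2] with z hz1 hz2
        rw [norm_mul]
        have e1 : ‖ℓ (v z.1 ω)‖ ≤ ‖ℓ‖ := by simpa [hz1] using ℓ.le_opNorm (v z.1 ω)
        have e2 : ‖ℓ' (v z.2 ω)‖ ≤ ‖ℓ'‖ := by simpa [hz2] using ℓ'.le_opNorm (v z.2 ω)
        exact mul_le_mul e1 e2 (norm_nonneg _) (norm_nonneg _)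
    have hGint : Integrable (fun q : Ω × ℝ × ℝ => ℓ (v q.2.1 q.1) * ℓ' (v q.2.2 q.1))
        (P.prod ((volume.restrict (Set.Ioc (0:ℝ) T)).prod
          (volume.restrict (Set.Ioc (0:ℝ) T)))) :=
      (integrable_const _).mono' hsmG.aestronglyMeasurable hboundG
    have swap1 : (∫ ω, (∫ z : ℝ × ℝ, ℓ (v z.1 ω) * ℓ' (v z.2 ω)
          ∂((volume.restrict (Set.Ioc (0:ℝ) T)).prod (volume.restrict (Set.Ioc (0:ℝ) T)))) ∂P)
        = ∫ z : ℝ × ℝ, (∫ ω, ℓ (v z.1 ω) * ℓ' (v z.2 ω) ∂P)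
            ∂((volume.restrict (Set.Ioc (0:ℝ) T)).prod (volume.restrict (Set.Ioc (0:ℝ) T))) :=
      integral_integral_swap hGint
    -- inner identification and reduction to iterated integral
    have hint2 : Integrable (fun z : ℝ × ℝ => k (z.2 - z.1))
        ((volume.restrict (Set.Ioc (0:ℝ) T)).prod (volume.restrict (Set.Ioc (0:ℝ) T))) := by
      refine (integrable_const K).mono'
        ((hkm.comp (measurable_snd.sub measurable_fst)).aestronglyMeasurable) ?_
      refine Filter.Eventually.of_forall fun z => ?_
      rw [Real.norm_eq_abs]
      refine le_trans (hkb _) ?_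
      calc K * Real.exp (-τ⁻¹ * |z.2 - z.1|) ≤ K * 1 := by
            refine mul_le_mul_of_nonneg_left ?_ hKnn
            refine Real.exp_le_one_iff.mpr ?_
            exact mul_nonpos_of_nonpos_of_nonneg (neg_nonpos.mpr (inv_nonneg.mpr hτ.le))
              (abs_nonneg _)
        _ = K := mul_one K
    have step4 : (∫ z : ℝ × ℝ, (∫ ω, ℓ (v z.1 ω) * ℓ' (v z.2 ω) ∂P)
          ∂((volume.restrict (Set.Ioc (0:ℝ) T)).prod (volume.restrict (Set.Ioc (0:ℝ) T))))
        = ∫ s in Set.Ioc (0:ℝ) T, (∫ u in Set.Ioc (0:ℝ) T, k (u - s)) := by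
      have hcg : (fun z : ℝ × ℝ => ∫ ω, ℓ (v z.1 ω) * ℓ' (v z.2 ω) ∂P)
          = fun z : ℝ × ℝ => k (z.2 - z.1) := by
        funext z; exact hkeq z.1 z.2
      rw [hcg, MeasureTheory.integral_prod _ hint2]
    -- translation of the inner integral
    have step5 : ∀ s : ℝ, (∫ u in Set.Ioc (0:ℝ) T, k (u - s))
        = ∫ t : ℝ, Set.indicator (Set.Ioc (-s) (T - s)) k t := by
      intro s
      rw [← intervalIntegral.integral_of_le hT.le,
        intervalIntegral.integral_comp_sub_right (fun x => k x) s,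
        intervalIntegral.integral_of_le (by linarith : (0:ℝ) - s ≤ T - s), zero_sub]
      exact (integral_indicator measurableSet_Ioc).symm
    -- integrability for the second swap
    have hJint : Integrable (Function.uncurry fun s t : ℝ =>
        Set.indicator (Set.Ioc (-s) (T - s)) k t)
        ((volume.restrict (Set.Ioc (0:ℝ) T)).prod volume) := by
      have hmJ : Measurable fun p : ℝ × ℝ => Set.indicator (Set.Ioc (-p.1) (T - p.1)) k p.2 := by
        have he : (fun p : ℝ × ℝ => Set.indicator (Set.Ioc (-p.1) (T - p.1)) k p.2)
            = fun p : ℝ × ℝ => if -p.1 < p.2 ∧ p.2 ≤ T - p.1 then k p.2 else 0 := by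
          funext p; simp [Set.indicator_apply, Set.mem_Ioc]
        rw [he]
        exact Measurable.ite
          ((measurableSet_lt measurable_fst.neg measurable_snd).inter
            (measurableSet_le measurable_snd (measurable_const.sub measurable_fst)))
          (hkm.comp measurable_snd) measurable_const
      refine Integrable.mono' (g := fun p : ℝ × ℝ => K * Real.exp (-τ⁻¹ * |p.2|)) ?_
        hmJ.aestronglyMeasurable ?_
      · have h1 := (integrable_const (1:ℝ) :
            Integrable (fun _ : ℝ => (1:ℝ)) (volume.restrict (Set.Ioc (0:ℝ) T))).mul_prod hexpint
        simpa using h1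
      · refine Filter.Eventually.of_forall fun p => ?_
        simp only [Function.uncurry, Real.norm_eq_abs]
        refine le_trans ?_ (hkb p.2)
        rw [Set.indicator_apply]
        split_ifs
        · exact le_rfl
        · simp [abs_nonneg]
    have swap2 : (∫ s in Set.Ioc (0:ℝ) T,
          (∫ t : ℝ, Set.indicator (Set.Ioc (-s) (T - s)) k t))
        = ∫ t : ℝ, ∫ s in Set.Ioc (0:ℝ) T, Set.indicator (Set.Ioc (-s) (T - s)) k t :=
      integral_integral_swap hJint
    -- computing the inner s-integral
    have step7 : ∀ t : ℝ, (∫ s in Set.Ioc (0:ℝ) T, Set.indicator (Set.Ioc (-s) (T - s)) k t)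
        = max (min T (T - t) - max 0 (-t)) 0 * k t := by
      intro t
      have hre : ∀ s : ℝ, Set.indicator (Set.Ioc (-s) (T - s)) k t
          = Set.indicator (Set.Ioc (-t) (T - t)) (fun _ => k t) s := by
        intro s
        simp only [Set.indicator_apply, Set.mem_Ioc, neg_lt, le_sub_comm]
      simp_rw [hre]
      rw [setIntegral_indicator measurableSet_Ioc, setIntegral_const, Set.Ioc_inter_Ioc,
        Real.volume_real_Ioc, smul_eq_mul]
    -- assemble
    calc T⁻¹ * (∫ ω, (∫ s in (0:ℝ)..T, ℓ (v s ω)) * (∫ s in (0:ℝ)..T, ℓ' (v s ω)) ∂P)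
        = T⁻¹ * ∫ z : ℝ × ℝ, (∫ ω, ℓ (v z.1 ω) * ℓ' (v z.2 ω) ∂P)
            ∂((volume.restrict (Set.Ioc (0:ℝ) T)).prod (volume.restrict (Set.Ioc (0:ℝ) T))) := by
          rw [show (∫ ω, (∫ s in (0:ℝ)..T, ℓ (v s ω)) * (∫ s in (0:ℝ)..T, ℓ' (v s ω)) ∂P)
              = ∫ ω, (∫ z : ℝ × ℝ, ℓ (v z.1 ω) * ℓ' (v z.2 ω)
                ∂((volume.restrict (Set.Ioc (0:ℝ) T)).prod
                  (volume.restrict (Set.Ioc (0:ℝ) T)))) ∂P from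
            integral_congr_ae (Filter.Eventually.of_forall step1), swap1]
      _ = T⁻¹ * ∫ s in Set.Ioc (0:ℝ) T, (∫ u in Set.Ioc (0:ℝ) T, k (u - s)) := by rw [step4]
      _ = T⁻¹ * ∫ s in Set.Ioc (0:ℝ) T,
            (∫ t : ℝ, Set.indicator (Set.Ioc (-s) (T - s)) k t) := by
          congr 1
          exact integral_congr_ae (Filter.Eventually.of_forall fun s => step5 s)
      _ = T⁻¹ * ∫ t : ℝ, ∫ s in Set.Ioc (0:ℝ) T, Set.indicator (Set.Ioc (-s) (T - s)) k t := by
          rw [swap2]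
      _ = T⁻¹ * ∫ t : ℝ, max (min T (T - t) - max 0 (-t)) 0 * k t := by
          congr 1
          exact integral_congr_ae (Filter.Eventually.of_forall fun t => step7 t)
      _ = ∫ t : ℝ, T⁻¹ * (max (min T (T - t) - max 0 (-t)) 0 * k t) :=
          (integral_const_mul _ _).symm
  -- the limit
  have hlim : Tendsto (fun T : ℝ => ∫ t : ℝ, T⁻¹ * (max (min T (T - t) - max 0 (-t)) 0 * k t))
      atTop (nhds (∫ t : ℝ, k t)) := by
    refine tendsto_integral_filter_of_dominated_convergence
      (fun t => K * Real.exp (-τ⁻¹ * |t|)) ?_ ?_ hexpint ?_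
    · refine Filter.Eventually.of_forall fun T => Measurable.aestronglyMeasurable ?_
      exact measurable_const.mul
        ((((measurable_const.min (measurable_const.sub measurable_id)).sub
          (measurable_const.max measurable_id.neg)).max measurable_const).mul hkm)
    · filter_upwards [eventually_ge_atTop (1:ℝ)] with T hT
      refine Filter.Eventually.of_forall fun t => ?_
      have hT0 : (0:ℝ) < T := lt_of_lt_of_le one_pos hT
      have h1 : 0 ≤ max (min T (T - t) - max 0 (-t)) 0 := le_max_right _ _
      have h2 : max (min T (T - t) - max 0 (-t)) 0 ≤ T := by
        refine max_le ?_ hT0.le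
        have hm1 : min T (T - t) ≤ T := min_le_left _ _
        have hm2 : (0:ℝ) ≤ max 0 (-t) := le_max_left _ _
        linarith
      rw [Real.norm_eq_abs, abs_mul, abs_mul, abs_of_nonneg (inv_nonneg.mpr hT0.le),
        abs_of_nonneg h1]
      have hstep : T⁻¹ * (max (min T (T - t) - max 0 (-t)) 0 * |k t|) ≤ T⁻¹ * (T * |k t|) :=
        mul_le_mul_of_nonneg_left (mul_le_mul_of_nonneg_right h2 (abs_nonneg _))
          (inv_nonneg.mpr hT0.le)
      refine le_trans hstep ?_
      rw [← mul_assoc, inv_mul_cancel₀ (ne_of_gt hT0), one_mul]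
      exact hkb t
    · refine Filter.Eventually.of_forall fun t => ?_
      have hev : ∀ᶠ T in atTop,
          T⁻¹ * (max (min T (T - t) - max 0 (-t)) 0 * k t) = (1 - |t| * T⁻¹) * k t := by
        filter_upwards [eventually_ge_atTop (|t| + 1)] with T hT
        have habs : 0 ≤ |t| := abs_nonneg t
        have h1 : |t| ≤ T := by linarith
        have hT0 : (0:ℝ) < T := by linarith
        have hw : min T (T - t) - max 0 (-t) = T - |t| := by
          rcases le_or_gt 0 t with h | h
          · rw [min_eq_right (by linarith [abs_of_nonneg h] : T - t ≤ T),
              max_eq_left (by linarith : -t ≤ 0), abs_of_nonneg h]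
            ring
          · rw [min_eq_left (by linarith [abs_of_neg h] : T ≤ T - t),
              max_eq_right (by linarith : (0:ℝ) ≤ -t), abs_of_neg h]
        rw [hw, max_eq_left (by linarith : (0:ℝ) ≤ T - |t|)]
        field_simp
      have hnice : Tendsto (fun T : ℝ => (1 - |t| * T⁻¹) * k t) atTop (nhds (k t)) := by
        have h0 : Tendsto (fun T : ℝ => (1 - |t| * T⁻¹)) atTop (nhds 1) := by
          have := (tendsto_inv_atTop_zero (𝕜 := ℝ)).const_mul |t|
          simpa using tendsto_const_nhds.sub this
        simpa using h0.mul_const (k t)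
      exact Tendsto.congr' (hev.mono fun T h => h.symm) hnice
  -- identify the limit with the target integral
  have hff : ∀ t : ℝ, (∫ ω, (ℓ (v 0 ω) * ℓ' (v t ω) + ℓ' (v 0 ω) * ℓ (v t ω)) ∂P)
      = φf t + ψf t := fun t => integral_add (hIprod ℓ ℓ' 0 t) (hIprod ℓ' ℓ 0 t)
  have hsplit : (∫ t : ℝ, k t) = ∫ t in Set.Ioi (0:ℝ), (φf t + ψf t) := by
    have h1 : (∫ t : ℝ, k t) = (∫ t in Set.Iic (0:ℝ), k t) + ∫ t in Set.Ioi (0:ℝ), k t := by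
      have := integral_add_compl (measurableSet_Iic (a := (0:ℝ))) hkint
      rw [Set.compl_Iic] at this
      exact this.symm
    have h2 : (∫ t in Set.Ioi (0:ℝ), k t) = ∫ t in Set.Ioi (0:ℝ), φf t := by
      refine setIntegral_congr_fun measurableSet_Ioi fun t ht => ?_
      rw [hkdef]
      exact if_pos (le_of_lt ht)
    have h3 : (∫ t in Set.Iic (0:ℝ), k t) = ∫ t in Set.Ioi (0:ℝ), ψf t := by
      have e : Set.EqOn k (fun t => ψf (-t)) (Set.Iic (0:ℝ)) := by
        intro t ht
        rcases eq_or_lt_of_le (show t ≤ 0 from ht) with h | h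
        · rw [hkdef, h]
          simp only [neg_zero, if_pos le_rfl]
          exact integral_congr_ae (Filter.Eventually.of_forall fun ω => mul_comm _ _)
        · rw [hkdef]
          simp only [if_neg (not_le.mpr h)]
      rw [setIntegral_congr_fun measurableSet_Iic e, integral_comp_neg_Iic 0 ψf, neg_zero]
    have hφI : IntegrableOn φf (Set.Ioi (0:ℝ)) := hconj1.mono_set Set.Ioi_subset_Ici_self
    have hψI : IntegrableOn ψf (Set.Ioi (0:ℝ)) := (hIOn ℓ' ℓ).mono_set Set.Ioi_subset_Ici_self
    rw [h1, h2, h3, add_comm, ← integral_add hφI hψI]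
  refine ⟨hconj1, ?_⟩
  have htarget : (∫ t in Set.Ioi (0:ℝ),
      (∫ ω, (ℓ (v 0 ω) * ℓ' (v t ω) + ℓ' (v 0 ω) * ℓ (v t ω)) ∂P)) = ∫ t : ℝ, k t := by
    rw [setIntegral_congr_fun measurableSet_Ioi fun t _ => hff t]
    exact hsplit.symm
  rw [htarget]
  refine Tendsto.congr' ?_ hlim
  filter_upwards [eventually_gt_atTop (0:ℝ)] with T hT
  exact (key T hT).symm
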